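/- Let 0 < θ < 1 and w_n = n^(-θ). Then for every positive integer k, the normalized constant-coefficient block basis (d_i^(k))_{i≥1} of d(w,p), given by d_i^(k) = W_k^{-1/p} Σ_{n=(i-1)k+1}^{ik} e_n, is C-equivalent to the unit vector basis (e_n) of d(w,p), where the constant C depends only on θ and p (not on k). Explicitly, ((1-θ)/2) w_i ≤ w_i^(k) ≤ ((2-2^θ)/(2^(1-θ)-1)) w_i for all i, k. -/

import Mathlib

/-- The Lorentz sequence space norm (coordinates indexed by `ℕ` starting at 0, so `w n` is the
paper's `w_{n+1}`): `‖f‖_{d(w,p)} = (sup_{π ∈ Perm ℕ} Σ_n |f(π n)|^p w_n)^{1/p}`. -/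
noncomputable def lorentzNorm (w : ℕ → ℝ) (p : ℝ) (f : ℕ → ℝ) : ℝ :=
  (⨆ π : Equiv.Perm ℕ, ∑' n : ℕ, |f (π n)| ^ p * w n) ^ (1 / p)

namespace Stmt18Aux
open Finset

noncomputable def ww (θ : ℝ) (n : ℕ) : ℝ := ((n : ℝ) + 1) ^ (-θ)

lemma ww_pos (θ : ℝ) (n : ℕ) : 0 < ww θ n := Real.rpow_pos_of_pos (by positivity) _

lemma ww_nonneg (θ : ℝ) (n : ℕ) : 0 ≤ ww θ n := (ww_pos θ n).le

lemma ww_anti {θ : ℝ} (hθ0 : 0 < θ) {m n : ℕ} (h : m ≤ n) : ww θ n ≤ ww θ m :=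
  Real.rpow_le_rpow_of_nonpos (by positivity)
    (by have := (Nat.cast_le (α := ℝ)).2 h; linarith) (by linarith)

lemma ww_le_one {θ : ℝ} (hθ0 : 0 < θ) (n : ℕ) : ww θ n ≤ 1 :=
  Real.rpow_le_one_of_one_le_of_nonpos
    (by have : (0:ℝ) ≤ (n:ℝ) := Nat.cast_nonneg n; linarith) (by linarith)

lemma cast_rpow_le_ww {θ : ℝ} (hθ0 : 0 < θ) {n m : ℕ} (h : n + 1 ≤ m) :
    ((m : ℝ)) ^ (-θ) ≤ ww θ n :=
  Real.rpow_le_rpow_of_nonpos (by positivity)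
    (by have := (Nat.cast_le (α := ℝ)).2 h; push_cast at this; linarith) (by linarith)

noncomputable def Wk (θ : ℝ) (k : ℕ) : ℝ := ∑ m ∈ Finset.range k, ww θ m

lemma Wk_pos (θ : ℝ) {k : ℕ} (hk : 0 < k) : 0 < Wk θ k :=
  Finset.sum_pos (fun i _ => ww_pos θ i) ⟨0, Finset.mem_range.2 hk⟩

lemma Wk_lb {θ : ℝ} (hθ0 : 0 < θ) {k : ℕ} (hk : 0 < k) : (k:ℝ) ^ (1-θ) ≤ Wk θ k := by
  have hkR : (0:ℝ) < k := by exact_mod_cast hk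
  have h1 : ∀ m ∈ range k, ((k:ℝ)) ^ (-θ) ≤ ww θ m := by
    intro m hm
    exact cast_rpow_le_ww hθ0 (by have := Finset.mem_range.1 hm; omega)
  calc (k:ℝ) ^ (1-θ) = (k:ℝ) * (k:ℝ) ^ (-θ) := by
        rw [show (1:ℝ) - θ = 1 + (-θ) by ring, Real.rpow_add hkR, Real.rpow_one]
    _ ≤ Wk θ k := by
        have := Finset.card_nsmul_le_sum (range k) (ww θ) ((k:ℝ) ^ (-θ)) h1
        simpa [nsmul_eq_mul, Wk] using this

lemma key_pt {θ : ℝ} (hθ0 : 0 < θ) (hθ1 : θ < 1) (n : ℕ) :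
    (1-θ) * ww θ n ≤ ((n+1 : ℕ) : ℝ) ^ (1-θ) - ((n : ℕ) : ℝ) ^ (1-θ) := by
  set a : ℝ := (n : ℝ) + 1 with ha
  have hn0 : (0:ℝ) ≤ (n:ℝ) := Nat.cast_nonneg n
  have ha1 : (1:ℝ) ≤ a := by rw [ha]; linarith
  have ha0 : (0:ℝ) < a := by linarith
  have hs : -1 ≤ -(1/a) := by
    have : 1/a ≤ 1 := by rw [div_le_one ha0]; linarith
    linarith
  have hB := rpow_one_add_le_one_add_mul_self hs (by linarith : (0:ℝ) ≤ 1-θ) (by linarith : (1:ℝ)-θ ≤ 1)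
  -- hB : (1 + -(1/a)) ^ (1-θ) ≤ 1 + (1-θ) * -(1/a)
  have h1a : (0:ℝ) ≤ 1 + -(1/a) := by
    have : 1/a ≤ 1 := by rw [div_le_one ha0]; linarith
    linarith
  have hmul := mul_le_mul_of_nonneg_left hB (Real.rpow_nonneg ha0.le (1-θ))
  have hlhs : a ^ (1-θ) * (1 + -(1/a)) ^ (1-θ) = ((n:ℝ)) ^ (1-θ) := by
    rw [← Real.mul_rpow ha0.le h1a]
    congr 1
    field_simp
    rw [ha]; ring
  have hrhs : a ^ (1-θ) * (1 + (1-θ) * -(1/a)) = a ^ (1-θ) - (1-θ) * a ^ (-θ) := by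
    have hdiv : a ^ (1-θ) / a = a ^ (-θ) := by
      have he : (1-θ) - 1 = -θ := by ring
      rw [← he, Real.rpow_sub ha0 (1-θ) 1, Real.rpow_one]
    field_simp
    rw [← hdiv]
    field_simp
    ring
  rw [hlhs, hrhs] at hmul
  have hcast : ((n+1 : ℕ) : ℝ) = a := by push_cast [ha]; ring
  have hww : ww θ n = a ^ (-θ) := rfl
  rw [hcast, hww]
  linarith

lemma Wk_ub {θ : ℝ} (hθ0 : 0 < θ) (hθ1 : θ < 1) (k : ℕ) :
    Wk θ k ≤ (k:ℝ) ^ (1-θ) / (1-θ) := by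
  have h1 : (1-θ) * Wk θ k ≤ (k:ℝ) ^ (1-θ) := by
    calc (1-θ) * Wk θ k = ∑ n ∈ range k, (1-θ) * ww θ n := Finset.mul_sum _ _ _
      _ ≤ ∑ n ∈ range k, (((n+1 : ℕ) : ℝ) ^ (1-θ) - ((n : ℕ) : ℝ) ^ (1-θ)) :=
          Finset.sum_le_sum (fun n _ => key_pt hθ0 hθ1 n)
      _ = ((k : ℕ) : ℝ) ^ (1-θ) - ((0 : ℕ) : ℝ) ^ (1-θ) :=
          Finset.sum_range_sub (fun n => ((n : ℕ) : ℝ) ^ (1-θ)) k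
      _ = (k:ℝ) ^ (1-θ) := by
          simp [Real.zero_rpow (by linarith : (1:ℝ)-θ ≠ 0)]
  rw [le_div_iff₀ (by linarith : (0:ℝ) < 1-θ)]
  linarith

noncomputable def blk (θ : ℝ) (k j : ℕ) : ℝ := ∑ n ∈ Finset.Ico (j*k) (j*k+k), ww θ n

lemma blk_nonneg (θ : ℝ) (k j : ℕ) : 0 ≤ blk θ k j :=
  Finset.sum_nonneg fun n _ => ww_nonneg θ n

lemma blk_lb {θ : ℝ} (hθ0 : 0 < θ) (k j : ℕ) :
    (k:ℝ) * (((j+1)*k : ℕ) : ℝ) ^ (-θ) ≤ blk θ k j := by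
  have h1 : ∀ n ∈ Finset.Ico (j*k) (j*k+k), (((j+1)*k : ℕ) : ℝ) ^ (-θ) ≤ ww θ n := by
    intro n hn
    have := Finset.mem_Ico.1 hn
    have h2 : (j+1)*k = j*k + k := by ring
    exact cast_rpow_le_ww hθ0 (by omega)
  have := Finset.card_nsmul_le_sum (Finset.Ico (j*k) (j*k+k)) (ww θ)
    ((((j+1)*k : ℕ) : ℝ) ^ (-θ)) h1
  have hc : (Finset.Ico (j*k) (j*k+k)).card = k := by rw [Nat.card_Ico]; omega
  rw [hc, nsmul_eq_mul] at this
  exact this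

lemma blk_ub {θ : ℝ} (hθ0 : 0 < θ) (k j : ℕ) : blk θ k j ≤ (k:ℝ) * ww θ (j*k) := by
  have h1 : ∀ n ∈ Finset.Ico (j*k) (j*k+k), ww θ n ≤ ww θ (j*k) := by
    intro n hn
    exact ww_anti hθ0 (Finset.mem_Ico.1 hn).1
  have := Finset.sum_le_card_nsmul (Finset.Ico (j*k) (j*k+k)) (ww θ) (ww θ (j*k)) h1
  have hc : (Finset.Ico (j*k) (j*k+k)).card = k := by rw [Nat.card_Ico]; omega
  rw [hc, nsmul_eq_mul] at this
  exact this

lemma ratio_lb {θ : ℝ} (hθ0 : 0 < θ) (hθ1 : θ < 1) {k : ℕ} (hk : 0 < k) (j : ℕ) :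
    (1-θ)/2 * ww θ j ≤ blk θ k j / Wk θ k := by
  have hkR : (0:ℝ) < k := by exact_mod_cast hk
  have hkne : ((k:ℝ)) ^ (-θ) ≠ 0 := (Real.rpow_pos_of_pos hkR _).ne'
  have hj1 : (0:ℝ) < (j:ℝ) + 1 := by positivity
  have hid : ((k:ℝ) * (((j+1)*k : ℕ) : ℝ) ^ (-θ)) / ((k:ℝ) ^ (1-θ) / (1-θ))
      = (1-θ) * ww θ j := by
    have hcast : (((j+1)*k : ℕ) : ℝ) = ((j:ℝ)+1) * (k:ℝ) := by push_cast; ring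
    rw [hcast, Real.mul_rpow hj1.le hkR.le,
      show (1:ℝ) - θ = 1 + (-θ) by ring, Real.rpow_add hkR, Real.rpow_one]
    have hww : ww θ j = ((j:ℝ)+1) ^ (-θ) := rfl
    rw [hww]
    field_simp
  calc (1-θ)/2 * ww θ j ≤ (1-θ) * ww θ j := by
        have := ww_nonneg θ j
        nlinarith
    _ = ((k:ℝ) * (((j+1)*k : ℕ) : ℝ) ^ (-θ)) / ((k:ℝ) ^ (1-θ) / (1-θ)) := hid.symm
    _ ≤ blk θ k j / Wk θ k :=
        div_le_div₀ (blk_nonneg θ k j) (blk_lb hθ0 k j) (Wk_pos θ hk) (Wk_ub hθ0 hθ1 k)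

lemma two_rpow_pos (θ : ℝ) : (0:ℝ) < (2:ℝ) ^ θ := Real.rpow_pos_of_pos two_pos θ

lemma one_le_two_rpow {θ : ℝ} (hθ0 : 0 ≤ θ) : (1:ℝ) ≤ (2:ℝ) ^ θ := by
  have := Real.rpow_le_rpow_of_exponent_le (one_le_two) hθ0
  rwa [Real.rpow_zero] at this

lemma ratio_ub {θ : ℝ} (hθ0 : 0 < θ) (hθ1 : θ < 1) {k : ℕ} (hk : 0 < k) (j : ℕ) :
    blk θ k j / Wk θ k ≤ (2:ℝ) ^ θ * ww θ j := by
  have hkR : (0:ℝ) < k := by exact_mod_cast hk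
  rcases Nat.eq_zero_or_pos j with rfl | hj
  · have hblk : blk θ k 0 = Wk θ k := by
      unfold blk Wk
      rw [Finset.range_eq_Ico, Nat.zero_mul, Nat.zero_add]
    rw [hblk, div_self (Wk_pos θ hk).ne']
    have hww : ww θ 0 = 1 := by
      show (((0:ℕ):ℝ)+1) ^ (-θ) = 1
      norm_num
    rw [hww, mul_one]
    exact one_le_two_rpow hθ0.le
  · have hjR : (0:ℝ) < (j:ℝ) := by exact_mod_cast hj
    -- blk ≤ k * j^(-θ) * k^(-θ)
    have h2 : ww θ (j*k) ≤ ((j:ℝ)) ^ (-θ) * ((k:ℝ)) ^ (-θ) := by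
      have hcast : ((j:ℝ)) * (k:ℝ) ≤ ((j*k : ℕ) : ℝ) + 1 := by push_cast; linarith
      have := Real.rpow_le_rpow_of_nonpos (by positivity : (0:ℝ) < (j:ℝ)*(k:ℝ))
        hcast (by linarith : -θ ≤ 0)
      calc ww θ (j*k) ≤ ((j:ℝ)*(k:ℝ)) ^ (-θ) := this
        _ = ((j:ℝ)) ^ (-θ) * ((k:ℝ)) ^ (-θ) := Real.mul_rpow hjR.le hkR.le
    have hblk : blk θ k j ≤ (k:ℝ) * (((j:ℝ)) ^ (-θ) * ((k:ℝ)) ^ (-θ)) := by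
      calc blk θ k j ≤ (k:ℝ) * ww θ (j*k) := blk_ub hθ0 k j
        _ ≤ _ := by
            have := mul_le_mul_of_nonneg_left h2 hkR.le
            exact this
    have hW : (k:ℝ) * ((k:ℝ)) ^ (-θ) ≤ Wk θ k := by
      have := Wk_lb hθ0 hk
      rwa [show (1:ℝ) - θ = 1 + (-θ) by ring, Real.rpow_add hkR, Real.rpow_one] at this
    have hstep1 : blk θ k j / Wk θ k ≤ ((j:ℝ)) ^ (-θ) := by
      have hd : blk θ k j / Wk θ k ≤
          ((k:ℝ) * (((j:ℝ)) ^ (-θ) * ((k:ℝ)) ^ (-θ))) / ((k:ℝ) * ((k:ℝ)) ^ (-θ)) :=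
        div_le_div₀ (by positivity) hblk
          (by positivity) hW
      calc blk θ k j / Wk θ k ≤ _ := hd
        _ = ((j:ℝ)) ^ (-θ) := by
            field_simp
    have hstep2 : ((j:ℝ)) ^ (-θ) ≤ (2:ℝ) ^ θ * ww θ j := by
      have hj1' : (1:ℝ) ≤ (j:ℝ) := by exact_mod_cast hj
      have h2j : ((2:ℝ)*(j:ℝ)) ^ (-θ) ≤ ((j:ℝ)+1) ^ (-θ) := by
        apply Real.rpow_le_rpow_of_nonpos (by positivity) (by linarith) (by linarith)
      have hsplit : ((2:ℝ)*(j:ℝ)) ^ (-θ) = (2:ℝ) ^ (-θ) * ((j:ℝ)) ^ (-θ) :=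
        Real.mul_rpow (by norm_num) hjR.le
      have hcancel : (2:ℝ) ^ θ * (2:ℝ) ^ (-θ) = 1 := by
        rw [← Real.rpow_add two_pos]; simp
      have hww : ww θ j = ((j:ℝ)+1) ^ (-θ) := rfl
      have := mul_le_mul_of_nonneg_left h2j (two_rpow_pos θ).le
      rw [hsplit, ← mul_assoc, hcancel, one_mul, ← hww] at this
      exact this
    exact hstep1.trans hstep2

lemma cup_eq {θ : ℝ} (hθ0 : 0 < θ) (hθ1 : θ < 1) :
    ((2:ℝ) - 2 ^ θ) / (2 ^ (1-θ) - 1) = (2:ℝ) ^ θ := by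
  have hd : (0:ℝ) < 2 ^ (1-θ) - 1 := by
    have := Real.rpow_lt_rpow_of_exponent_lt (one_lt_two) (by linarith : (0:ℝ) < 1-θ)
    rw [Real.rpow_zero] at this
    linarith
  rw [div_eq_iff hd.ne']
  have h2 : (2:ℝ) ^ θ * 2 ^ (1-θ) = 2 := by
    rw [← Real.rpow_add two_pos]; norm_num
  nlinarith [h2]

/-! ### Infrastructure for the Lorentz norm suprema -/

lemma term_nonneg (θ p : ℝ) (f : ℕ → ℝ) (π : Equiv.Perm ℕ) (n : ℕ) :
    0 ≤ |f (π n)| ^ p * ww θ n :=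
  mul_nonneg (Real.rpow_nonneg (abs_nonneg _) _) (ww_nonneg θ n)

lemma S_nonneg (θ p : ℝ) (f : ℕ → ℝ) (π : Equiv.Perm ℕ) :
    0 ≤ ∑' n, |f (π n)| ^ p * ww θ n :=
  tsum_nonneg (term_nonneg θ p f π)

lemma S_eq_sum {θ p : ℝ} (hp : 1 ≤ p) (f : ℕ → ℝ) (π : Equiv.Perm ℕ) (s : Finset ℕ)
    (hs : ∀ n ∉ s, f (π n) = 0) :
    ∑' n, |f (π n)| ^ p * ww θ n = ∑ n ∈ s, |f (π n)| ^ p * ww θ n :=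
  tsum_eq_sum (fun n hn => by
    rw [hs n hn, abs_zero, Real.zero_rpow (by linarith), zero_mul])

lemma S_le_const {θ p : ℝ} (hθ0 : 0 < θ) (hp : 1 ≤ p) (f : ℕ → ℝ) (F : Finset ℕ)
    (hF : ∀ n ∉ F, f n = 0) (π : Equiv.Perm ℕ) :
    ∑' n, |f (π n)| ^ p * ww θ n ≤ ∑ m ∈ F, |f m| ^ p := by
  set s := F.image ⇑π.symm with hsdef
  have hs : ∀ n ∉ s, f (π n) = 0 := by
    intro n hn
    apply hF
    intro hc
    exact hn (Finset.mem_image.2 ⟨π n, hc, π.symm_apply_apply n⟩)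
  rw [S_eq_sum hp f π s hs]
  calc ∑ n ∈ s, |f (π n)| ^ p * ww θ n ≤ ∑ n ∈ s, |f (π n)| ^ p := by
        apply Finset.sum_le_sum
        intro n _
        exact mul_le_of_le_one_right (Real.rpow_nonneg (abs_nonneg _) _) (ww_le_one hθ0 n)
    _ = ∑ m ∈ F, |f m| ^ p := by
        rw [hsdef, Finset.sum_image (fun x _ y _ h => π.symm.injective h)]
        apply Finset.sum_congr rfl
        intro m _
        rw [π.apply_symm_apply]

lemma S_bdd {θ p : ℝ} (hθ0 : 0 < θ) (hp : 1 ≤ p) (f : ℕ → ℝ) (F : Finset ℕ)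
    (hF : ∀ n ∉ F, f n = 0) :
    BddAbove (Set.range fun π : Equiv.Perm ℕ => ∑' n, |f (π n)| ^ p * ww θ n) := by
  refine ⟨∑ m ∈ F, |f m| ^ p, ?_⟩
  rintro x ⟨π, rfl⟩
  exact S_le_const hθ0 hp f F hF π

lemma sup_S_nonneg {θ p : ℝ} (hθ0 : 0 < θ) (hp : 1 ≤ p) (f : ℕ → ℝ) (F : Finset ℕ)
    (hF : ∀ n ∉ F, f n = 0) :
    0 ≤ ⨆ π : Equiv.Perm ℕ, ∑' n, |f (π n)| ^ p * ww θ n :=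
  le_trans (S_nonneg θ p f (Equiv.refl ℕ)) (le_ciSup (S_bdd hθ0 hp f F hF) _)

lemma abs_rpow_mul {p : ℝ} (hp : 1 ≤ p) {W : ℝ} (hW : 0 < W) (x : ℝ) :
    |x * W ^ (-(1/p))| ^ p = |x| ^ p * W⁻¹ := by
  have hWp : 0 < W ^ (-(1/p)) := Real.rpow_pos_of_pos hW _
  rw [abs_mul, abs_of_pos hWp, Real.mul_rpow (abs_nonneg x) hWp.le]
  congr 1
  rw [← Real.rpow_mul hW.le, show -(1/p) * p = -1 by field_simp, Real.rpow_neg_one]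

/-! ### Block combinatorics -/

lemma mem_block_div {k : ℕ} (hk : 0 < k) {l m : ℕ} (hm : m ∈ Finset.Ico (l*k) (l*k+k)) :
    m / k = l := by
  obtain ⟨h1, h2⟩ := Finset.mem_Ico.1 hm
  have ha : l ≤ m / k := (Nat.le_div_iff_mul_le hk).2 h1
  have he : (l+1)*k = l*k+k := by ring
  have hb : m / k < l + 1 := (Nat.div_lt_iff_lt_mul hk).2 (by omega)
  omega

lemma self_mem_block {k : ℕ} (hk : 0 < k) (m : ℕ) :
    m ∈ Finset.Ico ((m/k)*k) ((m/k)*k + k) := by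
  have h1 := Nat.div_add_mod m k
  have h2 := Nat.mod_lt m hk
  have h3 : (m/k)*k = k*(m/k) := Nat.mul_comm _ _
  exact Finset.mem_Ico.2 ⟨by omega, by omega⟩

lemma blocks_disjoint (k : ℕ) (s : Finset ℕ) :
    (↑s : Set ℕ).PairwiseDisjoint (fun l => Finset.Ico (l*k) (l*k+k)) := by
  intro i _ j _ hij
  apply Finset.disjoint_left.2
  intro m hmi hmj
  obtain ⟨h1, h2⟩ := Finset.mem_Ico.1 hmi
  obtain ⟨h3, h4⟩ := Finset.mem_Ico.1 hmj
  rcases Nat.lt_or_ge i j with h | h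
  · have h5 : (i+1)*k ≤ j*k := Nat.mul_le_mul_right k (by omega)
    have h6 : (i+1)*k = i*k+k := by ring
    omega
  · have hji : j < i := by omega
    have h5 : (j+1)*k ≤ i*k := Nat.mul_le_mul_right k (by omega)
    have h6 : (j+1)*k = j*k+k := by ring
    omega

lemma range_eq_biUnion (M : ℕ) {k : ℕ} (hk : 0 < k) :
    Finset.range (M*k) = (Finset.range M).biUnion (fun l => Finset.Ico (l*k) (l*k+k)) := by
  ext m
  simp only [Finset.mem_range, Finset.mem_biUnion, Finset.mem_Ico]
  constructor
  · intro h
    have h1 := Nat.div_add_mod m k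
    have h2 := Nat.mod_lt m hk
    have h3 : (m/k)*k = k*(m/k) := Nat.mul_comm _ _
    exact ⟨m/k, (Nat.div_lt_iff_lt_mul hk).2 h, by omega, by omega⟩
  · rintro ⟨l, hl, h1, h2⟩
    have h3 : (l+1)*k ≤ M*k := Nat.mul_le_mul_right k (by omega)
    have h4 : (l+1)*k = l*k+k := by ring
    omega

lemma exists_perm_extend : ∀ (M : ℕ) (f : Fin M → ℕ), Function.Injective f →
    ∃ π : Equiv.Perm ℕ, ∀ l : Fin M, π l.1 = f l := by
  intro M
  induction M with
  | zero => exact fun f _ => ⟨Equiv.refl ℕ, fun l => absurd l.2 (by omega)⟩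
  | succ M ih =>
    intro f hf
    obtain ⟨π', hπ'⟩ := ih (f ∘ Fin.castSucc) (hf.comp (Fin.castSucc_injective M))
    set a := π'.symm (f (Fin.last M)) with ha
    have hal : ∀ l : Fin M, a ≠ l.1 := by
      intro l hl
      have h1 : π' a = f (Fin.last M) := by rw [ha]; exact π'.apply_symm_apply _
      have h2 : π' a = f (Fin.castSucc l) := by rw [hl]; exact hπ' l
      have h3 := hf (h1.symm.trans h2)
      have h4 : (Fin.last M).1 = (Fin.castSucc l).1 := congrArg Fin.val h3
      have h5 : (Fin.castSucc l).1 = l.1 := rfl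
      have h6 := l.2
      simp [Fin.val_last] at h4
      omega
    refine ⟨(Equiv.swap (M:ℕ) a).trans π', ?_⟩
    intro l
    rcases Nat.lt_or_ge l.1 M with h | h
    · have h1 : Equiv.swap (M:ℕ) a l.1 = l.1 :=
        Equiv.swap_apply_of_ne_of_ne (by omega) (Ne.symm (hal ⟨l.1, h⟩))
      show π' (Equiv.swap (M:ℕ) a l.1) = f l
      rw [h1]
      have h2 := hπ' ⟨l.1, h⟩
      simp only [Function.comp_apply] at h2
      have h3 : Fin.castSucc (⟨l.1, h⟩ : Fin M) = l := Fin.ext rfl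
      rw [h3] at h2
      exact h2
    · have hlM : l.1 = M := by have := l.2; omega
      show π' (Equiv.swap (M:ℕ) a l.1) = f l
      rw [hlM, Equiv.swap_apply_left, ha, π'.apply_symm_apply]
      congr 1
      exact Fin.ext (by simp [Fin.val_last, hlM])

lemma fin_strictMono_le {N : ℕ} {f : Fin N → ℕ} (hf : StrictMono f) :
    ∀ j : Fin N, (j:ℕ) ≤ f j := by
  have key : ∀ n, ∀ (h : n < N), n ≤ f ⟨n, h⟩ := by
    intro n
    induction n with
    | zero => exact fun h => Nat.zero_le _
    | succ n ihn =>
      intro h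
      have h' : n < N := by omega
      have h1 := ihn h'
      have hlt : f ⟨n, h'⟩ < f ⟨n+1, h⟩ := hf (Fin.mk_lt_mk.2 (by omega))
      omega
  intro j
  have := key j.1 j.2
  simpa using this

noncomputable def gb (θ p : ℝ) (k : ℕ) (b : ℕ → ℝ) : ℕ → ℝ :=
  fun n => b (n/k) * (Wk θ k) ^ (-(1/p))

lemma gb_support {θ p : ℝ} {k : ℕ} (hk : 0 < k) (b : ℕ → ℝ) (F : Finset ℕ)
    (hF : ∀ n ∉ F, b n = 0) :
    ∀ n ∉ F.biUnion (fun i => Finset.Ico (i*k) (i*k+k)), gb θ p k b n = 0 := by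
  intro n hn
  show b (n/k) * (Wk θ k) ^ (-(1/p)) = 0
  suffices h : b (n/k) = 0 by rw [h, zero_mul]
  apply hF
  intro hc
  exact hn (Finset.mem_biUnion.2 ⟨n/k, hc, self_mem_block hk n⟩)

lemma dirA {θ p : ℝ} (hθ0 : 0 < θ) (hθ1 : θ < 1) (hp : 1 ≤ p) {k : ℕ} (hk : 0 < k)
    (b : ℕ → ℝ) (F : Finset ℕ) (hF : ∀ n ∉ F, b n = 0) :
    (⨆ π : Equiv.Perm ℕ, ∑' n, |b (π n)| ^ p * ww θ n) ≤
      (2/(1-θ)) * ⨆ σ : Equiv.Perm ℕ, ∑' n, |gb θ p k b (σ n)| ^ p * ww θ n := by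
  haveI : NeZero k := ⟨hk.ne'⟩
  have hW : 0 < Wk θ k := Wk_pos θ hk
  have hGb := gb_support (θ := θ) (p := p) hk b F hF
  have bddg := S_bdd hθ0 hp (gb θ p k b) _ hGb
  apply ciSup_le
  intro π
  set σπ : Equiv.Perm ℕ := (Nat.divModEquiv k).trans
    ((Equiv.prodCongr π (Equiv.refl (Fin k))).trans (Nat.divModEquiv k).symm) with hσπ
  have hσ : ∀ m, σπ m = π (m/k) * k + m % k := by
    intro m
    show (Nat.divModEquiv k).symm ((Equiv.prodCongr π (Equiv.refl (Fin k)))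
      ((Nat.divModEquiv k) m)) = _
    simp [Nat.divModEquiv, Equiv.prodCongr, Fin.val_natCast]
  have hσdiv : ∀ m, σπ m / k = π (m/k) := by
    intro m
    rw [hσ m, Nat.mul_comm, Nat.mul_add_div hk, Nat.div_eq_of_lt (Nat.mod_lt m hk),
      Nat.add_zero]
  set s0 := F.image ⇑π.symm with hs0
  have hb0 : ∀ n ∉ s0, b (π n) = 0 := by
    intro n hn
    apply hF
    intro hc
    exact hn (Finset.mem_image.2 ⟨π n, hc, π.symm_apply_apply n⟩)
  have hSb := S_eq_sum (θ := θ) hp b π s0 hb0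
  have hgs : ∀ m ∉ s0.biUnion (fun l => Finset.Ico (l*k) (l*k+k)),
      gb θ p k b (σπ m) = 0 := by
    intro m hm
    show b (σπ m / k) * (Wk θ k) ^ (-(1/p)) = 0
    suffices h : b (σπ m / k) = 0 by rw [h, zero_mul]
    rw [hσdiv m]
    apply hF
    intro hc
    apply hm
    refine Finset.mem_biUnion.2 ⟨m/k, ?_, self_mem_block hk m⟩
    exact Finset.mem_image.2 ⟨π (m/k), hc, π.symm_apply_apply _⟩
  have hSg := S_eq_sum (θ := θ) hp (gb θ p k b) σπ _ hgs
  have hSgeval : ∑ m ∈ s0.biUnion (fun l => Finset.Ico (l*k) (l*k+k)),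
      |gb θ p k b (σπ m)| ^ p * ww θ m
      = ∑ n ∈ s0, |b (π n)| ^ p * (Wk θ k)⁻¹ * blk θ k n := by
    rw [Finset.sum_biUnion (blocks_disjoint k s0)]
    apply Finset.sum_congr rfl
    intro n _
    have hterm : ∀ m ∈ Finset.Ico (n*k) (n*k+k),
        |gb θ p k b (σπ m)| ^ p * ww θ m = |b (π n)| ^ p * (Wk θ k)⁻¹ * ww θ m := by
      intro m hm
      have hdm : m / k = n := mem_block_div hk hm
      have hg : gb θ p k b (σπ m) = b (π n) * (Wk θ k) ^ (-(1/p)) := by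
        show b (σπ m / k) * (Wk θ k) ^ (-(1/p)) = _
        rw [hσdiv m, hdm]
      rw [hg, abs_rpow_mul hp hW]
    rw [Finset.sum_congr rfl hterm, ← Finset.mul_sum]
    rfl
  have hlow : ∀ n ∈ s0, (1-θ)/2 * (|b (π n)| ^ p * ww θ n)
      ≤ |b (π n)| ^ p * (Wk θ k)⁻¹ * blk θ k n := by
    intro n _
    have h1 := ratio_lb hθ0 hθ1 hk n
    calc (1-θ)/2 * (|b (π n)| ^ p * ww θ n)
        = |b (π n)| ^ p * ((1-θ)/2 * ww θ n) := by ring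
      _ ≤ |b (π n)| ^ p * (blk θ k n / Wk θ k) :=
          mul_le_mul_of_nonneg_left h1 (Real.rpow_nonneg (abs_nonneg _) _)
      _ = |b (π n)| ^ p * (Wk θ k)⁻¹ * blk θ k n := by
          rw [div_eq_inv_mul]; ring
  have hkey : (1-θ)/2 * ∑' n, |b (π n)| ^ p * ww θ n
      ≤ ∑' m, |gb θ p k b (σπ m)| ^ p * ww θ m := by
    rw [hSb, hSg, hSgeval, Finset.mul_sum]
    exact Finset.sum_le_sum hlow
  have hpos : (0:ℝ) < 1-θ := by linarith
  calc ∑' n, |b (π n)| ^ p * ww θ n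
      = (2/(1-θ)) * ((1-θ)/2 * ∑' n, |b (π n)| ^ p * ww θ n) := by
        field_simp
    _ ≤ (2/(1-θ)) * ∑' m, |gb θ p k b (σπ m)| ^ p * ww θ m :=
        mul_le_mul_of_nonneg_left hkey (by positivity)
    _ ≤ (2/(1-θ)) * ⨆ σ : Equiv.Perm ℕ, ∑' n, |gb θ p k b (σ n)| ^ p * ww θ n :=
        mul_le_mul_of_nonneg_left (le_ciSup bddg σπ) (by positivity)

lemma dirB {θ p : ℝ} (hθ0 : 0 < θ) (hθ1 : θ < 1) (hp : 1 ≤ p) {k : ℕ} (hk : 0 < k)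
    (b : ℕ → ℝ) (F : Finset ℕ) (hF : ∀ n ∉ F, b n = 0) :
    (⨆ σ : Equiv.Perm ℕ, ∑' n, |gb θ p k b (σ n)| ^ p * ww θ n) ≤
      (2:ℝ) ^ θ * ⨆ π : Equiv.Perm ℕ, ∑' n, |b (π n)| ^ p * ww θ n := by
  have hW : 0 < Wk θ k := Wk_pos θ hk
  set M := F.card with hM
  set N := M * k with hN
  have bddb := S_bdd hθ0 hp b F hF
  apply ciSup_le
  intro σ
  set U := F.biUnion (fun i => Finset.Ico (i*k) (i*k+k)) with hU
  have hUcard : U.card = N := by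
    rw [hU, Finset.card_biUnion (fun i hi j hj hij => blocks_disjoint k F hi hj hij)]
    rw [Finset.sum_congr rfl (fun i _ => by rw [Nat.card_Ico]; omega :
      ∀ i ∈ F, (Finset.Ico (i*k) (i*k+k)).card = k)]
    rw [Finset.sum_const, smul_eq_mul]
  set t := U.image ⇑σ.symm with ht
  have htcard : t.card = N := by
    rw [ht, Finset.card_image_of_injective _ σ.symm.injective, hUcard]
  have hgt : ∀ m ∉ t, gb θ p k b (σ m) = 0 := by
    intro m hm
    show b (σ m / k) * (Wk θ k) ^ (-(1/p)) = 0
    suffices h : b (σ m / k) = 0 by rw [h, zero_mul]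
    apply hF
    intro hc
    apply hm
    rw [ht]
    refine Finset.mem_image.2 ⟨σ m, ?_, σ.symm_apply_apply m⟩
    rw [hU]
    exact Finset.mem_biUnion.2 ⟨σ m / k, hc, self_mem_block hk (σ m)⟩
  have hterm : ∀ m ∈ t, |gb θ p k b (σ m)| ^ p * ww θ m
      = |b (σ m / k)| ^ p * (Wk θ k)⁻¹ * ww θ m := by
    intro m _
    show |b (σ m / k) * (Wk θ k) ^ (-(1/p))| ^ p * ww θ m = _
    rw [abs_rpow_mul hp hW]
  -- order-enumeration of t
  set ι := t.orderIsoOfFin htcard with hι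
  have hsum1 : ∑ m ∈ t, |b (σ m / k)| ^ p * (Wk θ k)⁻¹ * ww θ m
      = ∑ j : Fin N, |b (σ ((ι j : ℕ)) / k)| ^ p * (Wk θ k)⁻¹ * ww θ ((ι j : ℕ)) := by
    rw [← Finset.sum_coe_sort t (fun m => |b (σ m / k)| ^ p * (Wk θ k)⁻¹ * ww θ m)]
    exact (Equiv.sum_comp ι.toEquiv
      (fun x : {m // m ∈ t} => |b (σ (x : ℕ) / k)| ^ p * (Wk θ k)⁻¹ * ww θ (x : ℕ))).symm
  have hιmono : StrictMono (fun j : Fin N => ((ι j : ℕ))) := by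
    intro a c hac
    exact Subtype.coe_lt_coe.2 (ι.strictMono hac)
  have hige : ∀ j : Fin N, (j : ℕ) ≤ (ι j : ℕ) := fin_strictMono_le hιmono
  have hstepa : ∑ j : Fin N, |b (σ ((ι j : ℕ)) / k)| ^ p * (Wk θ k)⁻¹ * ww θ ((ι j : ℕ))
      ≤ ∑ j : Fin N, |b (σ ((ι j : ℕ)) / k)| ^ p * (Wk θ k)⁻¹ * ww θ (j : ℕ) := by
    apply Finset.sum_le_sum
    intro j _
    apply mul_le_mul_of_nonneg_left (ww_anti hθ0 (hige j))
    have := Real.rpow_nonneg (abs_nonneg (b (σ ((ι j : ℕ)) / k))) p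
    positivity
  -- sorted version of the coefficients
  set eF := F.orderIsoOfFin hM.symm with heF
  set cF : Fin M → ℝ := fun l => |b ((eF l : ℕ))| ^ p with hcF
  set ρ := Tuple.sort (fun l => -cF l) with hρ
  have hdmono : Monotone ((fun l => -cF l) ∘ ⇑ρ) := Tuple.monotone_sort _
  set dd : ℕ → ℝ := fun l => if h : l < M then cF (ρ ⟨l, h⟩) else 0 with hdd
  have hdd_nonneg : ∀ l, 0 ≤ dd l := by
    intro l
    rw [hdd]
    dsimp only
    split
    · exact Real.rpow_nonneg (abs_nonneg _) _
    · exact le_rfl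
  have hdd_anti : ∀ {l l' : ℕ}, l ≤ l' → dd l' ≤ dd l := by
    intro l l' h
    by_cases h1 : l' < M
    · have h2 : l < M := lt_of_le_of_lt h h1
      rw [hdd]
      dsimp only
      rw [dif_pos h1, dif_pos h2]
      have := hdmono (a := ⟨l, h2⟩) (b := ⟨l', h1⟩) h
      simp only [Function.comp_apply, neg_le_neg_iff] at this
      exact this
    · have : dd l' = 0 := by rw [hdd]; dsimp only; rw [dif_neg h1]
      rw [this]
      exact hdd_nonneg l
  -- the two bijections onto U
  have he1mem : ∀ j : Fin N, σ ((ι j : ℕ)) ∈ U := by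
    intro j
    have h1 : ((ι j : ℕ)) ∈ t := (ι j).2
    obtain ⟨x, hx, hxe⟩ := Finset.mem_image.1 h1
    rw [← hxe, σ.apply_symm_apply]
    exact hx
  set E1 : Fin N → {x // x ∈ U} := fun j => ⟨σ ((ι j : ℕ)), he1mem j⟩ with hE1
  have hE1inj : Function.Injective E1 := by
    intro a c hac
    have h1 : σ ((ι a : ℕ)) = σ ((ι c : ℕ)) := congrArg Subtype.val hac
    have h2 := σ.injective h1
    exact ι.toEquiv.injective (Subtype.ext h2)
  have hcardU : Fintype.card {x // x ∈ U} = N := by rw [Fintype.card_coe, hUcard]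
  have hE1bij : Function.Bijective E1 :=
    (Fintype.bijective_iff_injective_and_card E1).2 ⟨hE1inj, by simp [hcardU]⟩
  have hjdiv : ∀ j : Fin N, (j:ℕ)/k < M := by
    intro j
    exact (Nat.div_lt_iff_lt_mul hk).2 (by have := j.2; omega)
  have he2mem : ∀ j : Fin N,
      (eF (ρ ⟨(j:ℕ)/k, hjdiv j⟩) : ℕ) * k + (j:ℕ) % k ∈ U := by
    intro j
    rw [hU]
    refine Finset.mem_biUnion.2 ⟨(eF (ρ ⟨(j:ℕ)/k, hjdiv j⟩) : ℕ),
      (eF (ρ ⟨(j:ℕ)/k, hjdiv j⟩)).2, Finset.mem_Ico.2 ⟨Nat.le_add_right _ _, ?_⟩⟩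
    have := Nat.mod_lt (j:ℕ) hk
    omega
  set E2 : Fin N → {x // x ∈ U} :=
    fun j => ⟨(eF (ρ ⟨(j:ℕ)/k, hjdiv j⟩) : ℕ) * k + (j:ℕ) % k, he2mem j⟩ with hE2
  have hE2div : ∀ j : Fin N, (E2 j : ℕ) / k = (eF (ρ ⟨(j:ℕ)/k, hjdiv j⟩) : ℕ) := by
    intro j
    show ((eF (ρ ⟨(j:ℕ)/k, hjdiv j⟩) : ℕ) * k + (j:ℕ) % k) / k = _
    rw [Nat.mul_comm, Nat.mul_add_div hk, Nat.div_eq_of_lt (Nat.mod_lt _ hk), Nat.add_zero]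
  have hE2mod : ∀ j : Fin N, (E2 j : ℕ) % k = (j:ℕ) % k := by
    intro j
    show ((eF (ρ ⟨(j:ℕ)/k, hjdiv j⟩) : ℕ) * k + (j:ℕ) % k) % k = _
    rw [Nat.mul_comm, Nat.mul_add_mod]
    exact Nat.mod_eq_of_lt (Nat.mod_lt _ hk)
  have hE2inj : Function.Injective E2 := by
    intro a c hac
    have hv : (E2 a : ℕ) = (E2 c : ℕ) := congrArg Subtype.val hac
    have hd : (eF (ρ ⟨(a:ℕ)/k, hjdiv a⟩) : ℕ) = (eF (ρ ⟨(c:ℕ)/k, hjdiv c⟩) : ℕ) := by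
      rw [← hE2div a, ← hE2div c, hv]
    have h1 := eF.toEquiv.injective (Subtype.ext hd)
    have h2 := ρ.injective h1
    have hdk : (a:ℕ)/k = (c:ℕ)/k := congrArg Fin.val h2
    have hm : (a:ℕ)%k = (c:ℕ)%k := by rw [← hE2mod a, ← hE2mod c, hv]
    have ha1 := Nat.div_add_mod (a:ℕ) k
    have hc1 := Nat.div_add_mod (c:ℕ) k
    rw [hdk, hm] at ha1
    exact Fin.ext (by omega)
  have hE2bij : Function.Bijective E2 :=
    (Fintype.bijective_iff_injective_and_card E2).2 ⟨hE2inj, by simp [hcardU]⟩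
  set μ : Equiv.Perm (Fin N) :=
    (Equiv.ofBijective E1 hE1bij).trans (Equiv.ofBijective E2 hE2bij).symm with hμ
  have hμprop : ∀ j, E2 (μ j) = E1 j := by
    intro j
    show (Equiv.ofBijective E2 hE2bij) ((Equiv.ofBijective E2 hE2bij).symm
      ((Equiv.ofBijective E1 hE1bij) j)) = E1 j
    rw [Equiv.apply_symm_apply]
    rfl
  set u : Fin N → ℝ := fun j => dd ((j:ℕ)/k) with hu
  have hval : ∀ j : Fin N, |b (σ ((ι j : ℕ)) / k)| ^ p = u (μ j) := by
    intro j
    have h1 : (E2 (μ j) : ℕ) = σ ((ι j : ℕ)) := by rw [hμprop j]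
    have h2 : u (μ j) = |b ((E2 (μ j) : ℕ) / k)| ^ p := by
      simp only [hu, hdd]
      rw [dif_pos (hjdiv (μ j))]
      rw [hE2div (μ j)]
    rw [h2, h1]
  have humono : Monovary (fun j : Fin N => ww θ (j:ℕ)) u := by
    intro i j hij
    have hji : (j:ℕ) ≤ (i:ℕ) := by
      by_contra hc
      push_neg at hc
      have h1 : u j ≤ u i := hdd_anti (Nat.div_le_div_right (le_of_lt hc))
      exact absurd hij (not_lt.2 h1)
    exact ww_anti hθ0 hji
  have hrearr := humono.sum_mul_comp_perm_le_sum_mul (σ := μ)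
  have hsum_u : ∑ j : Fin N, ww θ (j:ℕ) * u j = ∑ l ∈ Finset.range M, dd l * blk θ k l := by
    have h1 : ∑ j : Fin N, ww θ (j:ℕ) * u j = ∑ m ∈ Finset.range N, ww θ m * dd (m/k) := by
      simp only [hu]
      exact Fin.sum_univ_eq_sum_range (fun m => ww θ m * dd (m/k)) N
    rw [h1, hN, range_eq_biUnion M hk, Finset.sum_biUnion (blocks_disjoint k (Finset.range M))]
    apply Finset.sum_congr rfl
    intro l _
    have h2 : ∀ m ∈ Finset.Ico (l*k) (l*k+k), ww θ m * dd (m/k) = dd l * ww θ m := by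
      intro m hm
      rw [mem_block_div hk hm]
      ring
    rw [Finset.sum_congr rfl h2, ← Finset.mul_sum]
    rfl
  have hblk_ub : ∀ l ∈ Finset.range M, dd l * blk θ k l ≤ dd l * ((2:ℝ)^θ * ww θ l * Wk θ k) := by
    intro l _
    apply mul_le_mul_of_nonneg_left _ (hdd_nonneg l)
    have h1 := ratio_ub hθ0 hθ1 hk l
    calc blk θ k l = (blk θ k l / Wk θ k) * Wk θ k := by field_simp
      _ ≤ ((2:ℝ)^θ * ww θ l) * Wk θ k := mul_le_mul_of_nonneg_right h1 hW.le
  have hEinj : Function.Injective (fun l : Fin M => (eF (ρ l) : ℕ)) := by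
    intro a c hac
    exact ρ.injective (eF.toEquiv.injective (Subtype.ext hac))
  obtain ⟨π0, hπ0⟩ := exists_perm_extend M _ hEinj
  have hddl : ∀ l ∈ Finset.range M, dd l * ww θ l = |b (π0 l)| ^ p * ww θ l := by
    intro l hl
    have hlM : l < M := Finset.mem_range.1 hl
    have h1 : dd l = |b (π0 l)| ^ p := by
      have h2 := hπ0 ⟨l, hlM⟩
      simp only [hdd, hcF]
      rw [dif_pos hlM]
      rw [show π0 l = ((eF (ρ ⟨l, hlM⟩) : ℕ)) from h2]
    rw [h1]
  have hπ0supp : ∀ n ∉ F.image ⇑π0.symm, b (π0 n) = 0 := by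
    intro n hn
    apply hF
    intro hc
    exact hn (Finset.mem_image.2 ⟨π0 n, hc, π0.symm_apply_apply n⟩)
  have hsummable : Summable (fun n => |b (π0 n)| ^ p * ww θ n) := by
    apply summable_of_ne_finset_zero (s := F.image ⇑π0.symm)
    intro n hn
    rw [hπ0supp n hn, abs_zero, Real.zero_rpow (by linarith), zero_mul]
  have hfinal : ∑ l ∈ Finset.range M, dd l * ww θ l
      ≤ ⨆ π : Equiv.Perm ℕ, ∑' n, |b (π n)| ^ p * ww θ n := by
    rw [Finset.sum_congr rfl hddl]
    refine le_trans (Summable.sum_le_tsum _ (fun i _ => term_nonneg θ p b π0 i) hsummable) ?_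
    exact le_ciSup bddb π0
  calc ∑' n, |gb θ p k b (σ n)| ^ p * ww θ n
      = ∑ m ∈ t, |gb θ p k b (σ m)| ^ p * ww θ m := S_eq_sum hp (gb θ p k b) σ t hgt
    _ = ∑ m ∈ t, |b (σ m / k)| ^ p * (Wk θ k)⁻¹ * ww θ m := Finset.sum_congr rfl hterm
    _ = ∑ j : Fin N, |b (σ ((ι j : ℕ)) / k)| ^ p * (Wk θ k)⁻¹ * ww θ ((ι j : ℕ)) := hsum1
    _ ≤ ∑ j : Fin N, |b (σ ((ι j : ℕ)) / k)| ^ p * (Wk θ k)⁻¹ * ww θ (j:ℕ) := hstepa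
    _ = (∑ j : Fin N, ww θ (j:ℕ) * u (μ j)) * (Wk θ k)⁻¹ := by
        rw [Finset.sum_mul]
        apply Finset.sum_congr rfl
        intro j _
        rw [← hval j]
        ring
    _ ≤ (∑ j : Fin N, ww θ (j:ℕ) * u j) * (Wk θ k)⁻¹ :=
        mul_le_mul_of_nonneg_right hrearr (inv_nonneg.2 hW.le)
    _ = (∑ l ∈ Finset.range M, dd l * blk θ k l) * (Wk θ k)⁻¹ := by rw [hsum_u]
    _ ≤ (∑ l ∈ Finset.range M, dd l * ((2:ℝ)^θ * ww θ l * Wk θ k)) * (Wk θ k)⁻¹ :=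
        mul_le_mul_of_nonneg_right (Finset.sum_le_sum hblk_ub) (inv_nonneg.2 hW.le)
    _ = (2:ℝ)^θ * ∑ l ∈ Finset.range M, dd l * ww θ l := by
        rw [Finset.sum_mul, Finset.mul_sum]
        apply Finset.sum_congr rfl
        intro l _
        field_simp
    _ ≤ (2:ℝ)^θ * ⨆ π : Equiv.Perm ℕ, ∑' n, |b (π n)| ^ p * ww θ n :=
        mul_le_mul_of_nonneg_left hfinal (two_rpow_pos θ).le

end Stmt18Aux


open Stmt18Aux in
theorem stmt18 (θ : ℝ) (hθ0 : 0 < θ) (hθ1 : θ < 1) (p : ℝ) (hp : 1 ≤ p) :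
    (∀ i k : ℕ, 1 ≤ i → 1 ≤ k →
      (1 - θ) / 2 * (i : ℝ) ^ (-θ) ≤
          (∑ n ∈ Finset.Ico ((i - 1) * k) (i * k), ((n : ℝ) + 1) ^ (-θ)) /
            (∑ n ∈ Finset.range k, ((n : ℝ) + 1) ^ (-θ)) ∧
        (∑ n ∈ Finset.Ico ((i - 1) * k) (i * k), ((n : ℝ) + 1) ^ (-θ)) /
            (∑ n ∈ Finset.range k, ((n : ℝ) + 1) ^ (-θ)) ≤
          (2 - 2 ^ θ) / (2 ^ (1 - θ) - 1) * (i : ℝ) ^ (-θ)) ∧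
    ∃ C ≥ (1 : ℝ), ∀ k : ℕ, 1 ≤ k → ∀ b : ℕ → ℝ, (Function.support b).Finite →
      lorentzNorm (fun n => ((n : ℝ) + 1) ^ (-θ)) p b ≤
          C * lorentzNorm (fun n => ((n : ℝ) + 1) ^ (-θ)) p
            (fun n => b (n / k) *
              (∑ m ∈ Finset.range k, ((m : ℝ) + 1) ^ (-θ)) ^ (-(1 / p))) ∧
        lorentzNorm (fun n => ((n : ℝ) + 1) ^ (-θ)) p
            (fun n => b (n / k) *
              (∑ m ∈ Finset.range k, ((m : ℝ) + 1) ^ (-θ)) ^ (-(1 / p))) ≤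
          C * lorentzNorm (fun n => ((n : ℝ) + 1) ^ (-θ)) p b := by
  constructor
  · intro i k hi hk
    obtain ⟨j, rfl⟩ : ∃ j, i = j + 1 := ⟨i - 1, by omega⟩
    have hk0 : 0 < k := hk
    have hcast : ((j+1 : ℕ) : ℝ) = (j:ℝ) + 1 := by push_cast; ring
    have hww : ((j+1 : ℕ) : ℝ) ^ (-θ) = ww θ j := by
      show ((j+1:ℕ):ℝ) ^ (-θ) = ((j:ℝ)+1) ^ (-θ)
      rw [hcast]
    have h1 : (j+1-1)*k = j*k := by simp
    have h2 : (j+1)*k = j*k + k := by ring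
    have hsum_blk : (∑ n ∈ Finset.Ico ((j+1-1)*k) ((j+1)*k), ((n:ℝ)+1) ^ (-θ)) = blk θ k j := by
      rw [h1, h2]; rfl
    have hsum_W : (∑ n ∈ Finset.range k, ((n:ℝ)+1) ^ (-θ)) = Wk θ k := rfl
    rw [hsum_blk, hsum_W, cup_eq hθ0 hθ1, hww]
    exact ⟨ratio_lb hθ0 hθ1 hk0 j, ratio_ub hθ0 hθ1 hk0 j⟩
  · refine ⟨(2/(1-θ)) ^ (1/p) + ((2:ℝ) ^ θ) ^ (1/p), ?_, ?_⟩
    · have h2 : (1:ℝ) ≤ 2/(1-θ) := by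
        rw [le_div_iff₀ (by linarith)]
        linarith
      have h1 : (1:ℝ) ≤ (2/(1-θ)) ^ (1/p) := by
        calc (1:ℝ) = 1 ^ (1/p) := (Real.one_rpow _).symm
          _ ≤ (2/(1-θ)) ^ (1/p) := Real.rpow_le_rpow zero_le_one h2 (by positivity)
      have h3 : (0:ℝ) ≤ ((2:ℝ) ^ θ) ^ (1/p) := Real.rpow_nonneg (two_rpow_pos θ).le _
      linarith
    · intro k hk b hb
      have hk0 : 0 < k := hk
      set F := hb.toFinset with hFdef
      have hF : ∀ n ∉ F, b n = 0 := by
        intro n hn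
        by_contra hc
        exact hn (hb.mem_toFinset.2 (Function.mem_support.2 hc))
      have hA := dirA hθ0 hθ1 hp hk0 b F hF
      have hB := dirB hθ0 hθ1 hp hk0 b F hF
      have hGb := gb_support (θ := θ) (p := p) hk0 b F hF
      have hsupb0 : 0 ≤ ⨆ π : Equiv.Perm ℕ, ∑' n, |b (π n)| ^ p * ww θ n :=
        sup_S_nonneg hθ0 hp b F hF
      have hsupg0 : 0 ≤ ⨆ π : Equiv.Perm ℕ, ∑' n, |gb θ p k b (π n)| ^ p * ww θ n :=
        sup_S_nonneg hθ0 hp (gb θ p k b) _ hGb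
      have hpinv : (0:ℝ) ≤ 1/p := by positivity
      have hc1 : (0:ℝ) ≤ 2/(1-θ) := div_nonneg (by norm_num) (by linarith)
      have hd1 : (0:ℝ) ≤ (2/(1-θ)) ^ (1/p) := Real.rpow_nonneg hc1 _
      have hd2 : (0:ℝ) ≤ ((2:ℝ) ^ θ) ^ (1/p) := Real.rpow_nonneg (two_rpow_pos θ).le _
      constructor
      · show (⨆ π : Equiv.Perm ℕ, ∑' n, |b (π n)| ^ p * ww θ n) ^ (1/p)
            ≤ ((2/(1-θ)) ^ (1/p) + ((2:ℝ) ^ θ) ^ (1/p)) *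
              (⨆ π : Equiv.Perm ℕ, ∑' n, |gb θ p k b (π n)| ^ p * ww θ n) ^ (1/p)
        calc (⨆ π : Equiv.Perm ℕ, ∑' n, |b (π n)| ^ p * ww θ n) ^ (1/p)
            ≤ ((2/(1-θ)) * ⨆ π : Equiv.Perm ℕ, ∑' n, |gb θ p k b (π n)| ^ p * ww θ n) ^ (1/p) :=
              Real.rpow_le_rpow hsupb0 hA hpinv
          _ = (2/(1-θ)) ^ (1/p) *
              (⨆ π : Equiv.Perm ℕ, ∑' n, |gb θ p k b (π n)| ^ p * ww θ n) ^ (1/p) :=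
              Real.mul_rpow hc1 hsupg0
          _ ≤ ((2/(1-θ)) ^ (1/p) + ((2:ℝ) ^ θ) ^ (1/p)) *
              (⨆ π : Equiv.Perm ℕ, ∑' n, |gb θ p k b (π n)| ^ p * ww θ n) ^ (1/p) := by
              apply mul_le_mul_of_nonneg_right _ (Real.rpow_nonneg hsupg0 _)
              linarith
      · show (⨆ π : Equiv.Perm ℕ, ∑' n, |gb θ p k b (π n)| ^ p * ww θ n) ^ (1/p)
            ≤ ((2/(1-θ)) ^ (1/p) + ((2:ℝ) ^ θ) ^ (1/p)) *
              (⨆ π : Equiv.Perm ℕ, ∑' n, |b (π n)| ^ p * ww θ n) ^ (1/p)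
        calc (⨆ π : Equiv.Perm ℕ, ∑' n, |gb θ p k b (π n)| ^ p * ww θ n) ^ (1/p)
            ≤ ((2:ℝ) ^ θ * ⨆ π : Equiv.Perm ℕ, ∑' n, |b (π n)| ^ p * ww θ n) ^ (1/p) :=
              Real.rpow_le_rpow hsupg0 hB hpinv
          _ = ((2:ℝ) ^ θ) ^ (1/p) *
              (⨆ π : Equiv.Perm ℕ, ∑' n, |b (π n)| ^ p * ww θ n) ^ (1/p) :=
              Real.mul_rpow (two_rpow_pos θ).le hsupb0
          _ ≤ ((2/(1-θ)) ^ (1/p) + ((2:ℝ) ^ θ) ^ (1/p)) *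
              (⨆ π : Equiv.Perm ℕ, ∑' n, |b (π n)| ^ p * ww θ n) ^ (1/p) := by
              apply mul_le_mul_of_nonneg_right _ (Real.rpow_nonneg hsupb0 _)
              linarith
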